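/- arXiv:1703.07251 — 2 statements merged into one kernel-verified Lean document; each statement's English description precedes it below -/
import Mathlib

section
/- Let A = {p + q·r : r = 1, …, k} be an arithmetic progression for some p, q ∈ ℝ and integer k ≥ 1, and let e_1, e_2 ∈ A^n (i.e. every coordinate of e_1 and of e_2 lies in A). Then e_1 ∨ e_2 ∈ A^n and e_1 ∧ e_2 ∈ A^n. -/
set_option maxHeartbeats 800000

/-- The vector of cumulative sums of `x`: `cumsum x m = x 0 + ⋯ + x m`. -/
def cumsum {n : ℕ} (x : Fin n → ℝ) (m : Fin n) : ℝ :=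
  ∑ i ∈ Finset.univ.filter (fun i => i ≤ m), x i

/-- The arithmetic progression `A = {p + q·r : r = 1,…,k}`. -/
def inAP (p q : ℝ) (k : ℕ) (x : ℝ) : Prop :=
  ∃ r : ℕ, 1 ≤ r ∧ r ≤ k ∧ x = p + q * r

lemma cumsum_at_zero {n : ℕ} (x : Fin n → ℝ) (i : Fin n) (h : i.val = 0) :
    cumsum x i = x i := by
  unfold cumsum
  have hs : Finset.univ.filter (fun j => j ≤ i) = {i} := by
    ext j
    simp only [Finset.mem_filter, Finset.mem_univ, true_and, Finset.mem_singleton,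
      Fin.le_def, Fin.ext_iff]
    omega
  rw [hs, Finset.sum_singleton]

lemma cumsum_succ {n : ℕ} (x : Fin n → ℝ) (i i' : Fin n) (h : i.val = i'.val + 1) :
    cumsum x i = cumsum x i' + x i := by
  unfold cumsum
  have hs : Finset.univ.filter (fun j => j ≤ i)
      = insert i (Finset.univ.filter (fun j => j ≤ i')) := by
    ext j
    simp only [Finset.mem_filter, Finset.mem_univ, true_and, Finset.mem_insert,
      Fin.le_def, Fin.ext_iff]
    omega
  rw [hs, Finset.sum_insert, add_comm]
  simp only [Finset.mem_filter, Finset.mem_univ, true_and, Fin.le_def]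
  omega

lemma inAP_sandwich (p q : ℝ) (k : ℕ) (hk : 1 ≤ k) (x y z : ℝ) (t : ℤ)
    (hx : inAP p q k x) (hy : inAP p q k y)
    (hz : z = p + q * t) (hlo : min x y ≤ z) (hhi : z ≤ max x y) :
    inAP p q k z := by
  obtain ⟨r₁, hr₁1, hr₁k, hx⟩ := hx
  obtain ⟨r₂, hr₂1, hr₂k, hy⟩ := hy
  rcases eq_or_ne q 0 with hq | hq
  · refine ⟨1, le_rfl, hk, ?_⟩
    rw [hz, hq]; ring
  have hr₁1' : (1 : ℝ) ≤ (r₁ : ℝ) := by exact_mod_cast hr₁1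
  have hr₂1' : (1 : ℝ) ≤ (r₂ : ℝ) := by exact_mod_cast hr₂1
  have hr₁k' : (r₁ : ℝ) ≤ (k : ℝ) := by exact_mod_cast hr₁k
  have hr₂k' : (r₂ : ℝ) ≤ (k : ℝ) := by exact_mod_cast hr₂k
  subst hx hy hz
  -- extract "q * r ≤ q * t" style inequalities
  have hlo' : q * (r₁ : ℝ) ≤ q * t ∨ q * (r₂ : ℝ) ≤ q * t := by
    rcases min_cases (p + q * (r₁:ℝ)) (p + q * (r₂:ℝ)) with ⟨hm, _⟩ | ⟨hm, _⟩ <;>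
      rw [hm] at hlo
    · left; linarith
    · right; linarith
  have hhi' : q * (t : ℝ) ≤ q * r₁ ∨ q * (t : ℝ) ≤ q * r₂ := by
    rcases max_cases (p + q * (r₁:ℝ)) (p + q * (r₂:ℝ)) with ⟨hm, _⟩ | ⟨hm, _⟩ <;>
      rw [hm] at hhi
    · left; linarith
    · right; linarith
  have hbound : (1 : ℝ) ≤ (t : ℝ) ∧ (t : ℝ) ≤ (k : ℝ) := by
    rcases lt_or_gt_of_ne hq with hq0 | hq0
    · -- q < 0 : inequalities flip
      constructor
      · rcases hhi' with h | h
        · have := le_of_mul_le_mul_left (a := -q) (by linarith : -q * (r₁:ℝ) ≤ -q * t) (by linarith)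
          linarith
        · have := le_of_mul_le_mul_left (a := -q) (by linarith : -q * (r₂:ℝ) ≤ -q * t) (by linarith)
          linarith
      · rcases hlo' with h | h
        · have := le_of_mul_le_mul_left (a := -q) (by linarith : -q * (t:ℝ) ≤ -q * r₁) (by linarith)
          linarith
        · have := le_of_mul_le_mul_left (a := -q) (by linarith : -q * (t:ℝ) ≤ -q * r₂) (by linarith)
          linarith
    · constructor
      · rcases hlo' with h | h
        · have := le_of_mul_le_mul_left h hq0; linarith
        · have := le_of_mul_le_mul_left h hq0; linarith
      · rcases hhi' with h | h
        · have := le_of_mul_le_mul_left h hq0; linarith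
        · have := le_of_mul_le_mul_left h hq0; linarith
  obtain ⟨ht1, htk⟩ := hbound
  have ht1' : 1 ≤ t := by exact_mod_cast ht1
  have htk' : t ≤ (k : ℤ) := by exact_mod_cast htk
  refine ⟨t.toNat, by omega, by omega, ?_⟩
  have hcast : ((t.toNat : ℕ) : ℝ) = (t : ℝ) := by
    norm_cast; omega
  rw [hcast]

lemma comb (p q : ℝ) (k : ℕ) (hk : 1 ≤ k) (a b c d : ℝ) (r₁ r₂ : ℕ) (u : ℤ)
    (h1 : 1 ≤ r₁) (h1k : r₁ ≤ k) (h2 : 1 ≤ r₂) (h2k : r₂ ≤ k)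
    (hac : a - c = p + q * r₁) (hbd : b - d = p + q * r₂) (hcd : c - d = q * u)
    (z : ℝ) (hz : z = a - c ∨ z = b - d ∨ z = a - d ∨ z = b - c)
    (hlo : min (a - c) (b - d) ≤ z) (hhi : z ≤ max (a - c) (b - d)) :
    inAP p q k z := by
  have hx : inAP p q k (a - c) := ⟨r₁, h1, h1k, hac⟩
  have hy : inAP p q k (b - d) := ⟨r₂, h2, h2k, hbd⟩
  rcases hz with hz | hz | hz | hz
  · exact hz ▸ hx
  · exact hz ▸ hy
  · refine inAP_sandwich p q k hk _ _ _ ((r₁ : ℤ) + u) hx hy ?_ hlo hhi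
    push_cast
    rw [hz]; linarith [hac, hcd]
  · refine inAP_sandwich p q k hk _ _ _ ((r₂ : ℤ) - u) hx hy ?_ hlo hhi
    push_cast
    rw [hz]; linarith [hbd, hcd]

lemma max_diff (a b c d z : ℝ) (hz : z = max a b - max c d) :
    (z = a - c ∨ z = b - d ∨ z = a - d ∨ z = b - c) ∧
      min (a - c) (b - d) ≤ z ∧ z ≤ max (a - c) (b - d) := by
  rcases max_cases a b with ⟨hab, hab'⟩ | ⟨hab, hab'⟩ <;>
    rcases max_cases c d with ⟨hcd, hcd'⟩ | ⟨hcd, hcd'⟩ <;>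
    rw [hab, hcd] at hz <;>
    refine ⟨by tauto, ?_, ?_⟩ <;>
    [skip; skip; skip; skip; skip; skip; skip; skip] <;>
    first
      | (rw [min_le_iff]; first | (left; linarith) | (right; linarith))
      | (rw [le_max_iff]; first | (left; linarith) | (right; linarith))

lemma min_diff (a b c d z : ℝ) (hz : z = min a b - min c d) :
    (z = a - c ∨ z = b - d ∨ z = a - d ∨ z = b - c) ∧
      min (a - c) (b - d) ≤ z ∧ z ≤ max (a - c) (b - d) := by
  rcases min_cases a b with ⟨hab, hab'⟩ | ⟨hab, hab'⟩ <;>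
    rcases min_cases c d with ⟨hcd, hcd'⟩ | ⟨hcd, hcd'⟩ <;>
    rw [hab, hcd] at hz <;>
    refine ⟨by tauto, ?_, ?_⟩ <;>
    first
      | (rw [min_le_iff]; first | (left; linarith) | (right; linarith))
      | (rw [le_max_iff]; first | (left; linarith) | (right; linarith))

theorem stmt_12 (n : ℕ) (p q : ℝ) (k : ℕ) (hk : 1 ≤ k)
    (e₁ e₂ : Fin n → ℝ)
    (he₁ : ∀ i, inAP p q k (e₁ i)) (he₂ : ∀ i, inAP p q k (e₂ i))
    (sup inf : Fin n → ℝ)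
    (hsup : ∀ m, cumsum sup m = max (cumsum e₁ m) (cumsum e₂ m))
    (hinf : ∀ m, cumsum inf m = min (cumsum e₁ m) (cumsum e₂ m)) :
    (∀ i, inAP p q k (sup i)) ∧ (∀ i, inAP p q k (inf i)) := by
  choose r₁ hr₁1 hr₁k hre₁ using he₁
  choose r₂ hr₂1 hr₂k hre₂ using he₂
  have hdiff : ∀ m : Fin n, cumsum e₁ m - cumsum e₂ m
      = q * ((∑ j ∈ Finset.univ.filter (fun j => j ≤ m), ((r₁ j : ℤ) - (r₂ j : ℤ)) : ℤ) : ℝ) := by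
    intro m
    unfold cumsum
    rw [← Finset.sum_sub_distrib]
    push_cast
    rw [Finset.mul_sum]
    refine Finset.sum_congr rfl fun j _ => ?_
    rw [hre₁ j, hre₂ j]; ring
  have main : ∀ (v : Fin n → ℝ),
      ((∀ m, cumsum v m = max (cumsum e₁ m) (cumsum e₂ m)) ∨
       (∀ m, cumsum v m = min (cumsum e₁ m) (cumsum e₂ m))) →
      ∀ i, inAP p q k (v i) := by
    intro v hv i
    rcases Nat.eq_zero_or_pos i.val with h0 | hpos
    · -- i = 0
      have hc : cumsum v i = v i := cumsum_at_zero v i h0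
      have hc1 : cumsum e₁ i = e₁ i := cumsum_at_zero e₁ i h0
      have hc2 : cumsum e₂ i = e₂ i := cumsum_at_zero e₂ i h0
      rcases hv with hvm | hvm
      · have h := hvm i
        rw [hc, hc1, hc2] at h
        rcases max_cases (e₁ i) (e₂ i) with ⟨he, _⟩ | ⟨he, _⟩
        · exact ⟨r₁ i, hr₁1 i, hr₁k i, by rw [h, he, hre₁ i]⟩
        · exact ⟨r₂ i, hr₂1 i, hr₂k i, by rw [h, he, hre₂ i]⟩
      · have h := hvm i
        rw [hc, hc1, hc2] at h
        rcases min_cases (e₁ i) (e₂ i) with ⟨he, _⟩ | ⟨he, _⟩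
        · exact ⟨r₁ i, hr₁1 i, hr₁k i, by rw [h, he, hre₁ i]⟩
        · exact ⟨r₂ i, hr₂1 i, hr₂k i, by rw [h, he, hre₂ i]⟩
    · -- i = i' + 1
      set i' : Fin n := ⟨i.val - 1, by omega⟩ with hi'
      have hsucc' : i.val = i'.val + 1 := by simp only [hi']; omega
      set a := cumsum e₁ i with ha
      set b := cumsum e₂ i with hb
      set c := cumsum e₁ i' with hc
      set d := cumsum e₂ i' with hd
      have hE1 : a - c = p + q * (r₁ i) := by
        have h := cumsum_succ e₁ i i' hsucc'
        rw [← ha, ← hc] at h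
        rw [h, hre₁ i]; ring
      have hE2 : b - d = p + q * (r₂ i) := by
        have h := cumsum_succ e₂ i i' hsucc'
        rw [← hb, ← hd] at h
        rw [h, hre₂ i]; ring
      set u : ℤ := ∑ j ∈ Finset.univ.filter (fun j => j ≤ i'), ((r₁ j : ℤ) - (r₂ j : ℤ)) with hu
      have hCD : c - d = q * (u : ℝ) := hdiff i'
      have hvi0 : v i = cumsum v i - cumsum v i' := by
        have h := cumsum_succ v i i' hsucc'
        linarith
      rcases hv with hvm | hvm
      · have hvi : v i = max a b - max c d := by
          rw [hvi0, hvm i, hvm i']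
        obtain ⟨hz, hlo, hhi⟩ := max_diff a b c d (v i) hvi
        exact comb p q k hk a b c d (r₁ i) (r₂ i) u (hr₁1 i) (hr₁k i)
          (hr₂1 i) (hr₂k i) hE1 hE2 hCD (v i) hz hlo hhi
      · have hvi : v i = min a b - min c d := by
          rw [hvi0, hvm i, hvm i']
        obtain ⟨hz, hlo, hhi⟩ := min_diff a b c d (v i) hvi
        exact comb p q k hk a b c d (r₁ i) (r₂ i) u (hr₁1 i) (hr₁k i)
          (hr₂1 i) (hr₂k i) hE1 hE2 hCD (v i) hz hlo hhi
  exact ⟨main sup (Or.inl hsup), main inf (Or.inr hinf)⟩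
end

section
/- Let e_1 = (1,1,1,1,1,1,1,1,1), e_2 = (1,−1,−1,−1,−1,−1,−1,−1,−1), e_3 = (1,1,−1,1,−1,−1,−1,−1,1), e_4 = (1,−1,1,−1,1,1,1,1,−1), e_5 = (1,1,−1,−1,1,−1,1,1,−1), e_6 = (1,−1,1,1,−1,1,−1,−1,1), e_7 = (1,1,−1,−1,1,−1,−1,1,−1), e_8 = (1,−1,1,1,−1,1,1,−1,1) in {+1,−1}^9 (these are ε_0, ε_255, ε_94, ε_161, ε_105, ε_150, ε_109, ε_146 in the binary enumeration). Then (e_1, …, e_8) is an 8-tuplet: for every a ∈ Q, at least 4 of the 8 numbers |e_1 a|, …, |e_8 a| are ≤ ‖a‖. -/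
open scoped Classical

set_option maxRecDepth 10000 in
lemma tuplet18_boolHelper : ∀ f : Fin 8 → Bool,
    (f 2 = true ∨ f 3 = true) → (f 4 = true ∨ f 5 = true) → (f 6 = true ∨ f 7 = true) →
    (f 0 = true ∨ f 1 = true ∨ (f 2 = true ∧ f 3 = true) ∨ (f 4 = true ∧ f 5 = true) ∨ (f 6 = true ∧ f 7 = true)) →
    4 ≤ (Finset.univ.filter (fun i => f i = true)).card := by decide

lemma tuplet18_helper (G : Fin 8 → Prop) [DecidablePred G]
    (h1 : G 2 ∨ G 3) (h2 : G 4 ∨ G 5) (h3 : G 6 ∨ G 7)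
    (h0 : G 0 ∨ G 1 ∨ (G 2 ∧ G 3) ∨ (G 4 ∧ G 5) ∨ (G 6 ∧ G 7)) :
    4 ≤ (Finset.univ.filter G).card := by
  have e : Finset.univ.filter G = Finset.univ.filter (fun i => decide (G i) = true) := by
    apply Finset.filter_congr; intro x _; simp
  rw [e]
  exact tuplet18_boolHelper (fun i => decide (G i)) (by simpa using h1) (by simpa using h2)
    (by simpa using h3) (by simpa using h0)

lemma tuplet18_sum9 (f : Fin 9 → ℝ) : ∑ i, f i = f 0 + f 1 + f 2
    + f 3 + f 4 + f 5 + f 6 + f 7 + f 8 := by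
  simp [Fin.sum_univ_succ]
  norm_num [Fin.succ]
  ring
lemma tuplet18_pair3neg (p a1 a2 a3 a4 a5 a6 a7 a8 : ℝ)
    (o0 : a1 ≤ p) (o1 : a2 ≤ a1) (o2 : a3 ≤ a2) (o3 : a4 ≤ a3) (o4 : a5 ≤ a4)
    (o5 : a6 ≤ a5) (o6 : a7 ≤ a6) (o7 : a8 ≤ a7) (o8 : 0 ≤ a8)
    (ht : a1-a2+a3-a4-a5-a6-a7+a8 ≤ 0) :
    (p + (a1-a2+a3-a4-a5-a6-a7+a8))^2 ≤ p^2+a1^2+a2^2+a3^2+a4^2+a5^2+a6^2+a7^2+a8^2 := by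
  nlinarith [sq_nonneg (p + (a1-a2+a3-a4-a5-a6-a7+a8)), mul_nonneg o8 (sub_nonneg.2 o7)]

lemma tuplet18_pair3pos (p a1 a2 a3 a4 a5 a6 a7 a8 : ℝ)
    (o0 : a1 ≤ p) (o1 : a2 ≤ a1) (o2 : a3 ≤ a2) (o3 : a4 ≤ a3) (o4 : a5 ≤ a4)
    (o5 : a6 ≤ a5) (o6 : a7 ≤ a6) (o7 : a8 ≤ a7) (o8 : 0 ≤ a8)
    (ht : a1-a2+a3-a4-a5-a6-a7+a8 ≥ 0) :
    (p - (a1-a2+a3-a4-a5-a6-a7+a8))^2 ≤ p^2+a1^2+a2^2+a3^2+a4^2+a5^2+a6^2+a7^2+a8^2 := by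
  nlinarith [sq_nonneg (p - (a1-a2+a3-a4-a5-a6-a7+a8)), mul_nonneg o8 (sub_nonneg.2 o7)]
lemma tuplet18_pair5neg (p a1 a2 a3 a4 a5 a6 a7 a8 : ℝ)
    (o0 : a1 ≤ p) (o1 : a2 ≤ a1) (o2 : a3 ≤ a2) (o3 : a4 ≤ a3) (o4 : a5 ≤ a4)
    (o5 : a6 ≤ a5) (o6 : a7 ≤ a6) (o7 : a8 ≤ a7) (o8 : 0 ≤ a8)
    (ht : a1-a2-a3+a4-a5+a6+a7-a8 ≤ 0) :
    (p + (a1-a2-a3+a4-a5+a6+a7-a8))^2 ≤ p^2+a1^2+a2^2+a3^2+a4^2+a5^2+a6^2+a7^2+a8^2 := by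
  nlinarith [sq_nonneg (p + (a1-a2-a3+a4-a5+a6+a7-a8)), mul_nonneg o8 (sub_nonneg.2 o7)]

lemma tuplet18_pair5pos (p a1 a2 a3 a4 a5 a6 a7 a8 : ℝ)
    (o0 : a1 ≤ p) (o1 : a2 ≤ a1) (o2 : a3 ≤ a2) (o3 : a4 ≤ a3) (o4 : a5 ≤ a4)
    (o5 : a6 ≤ a5) (o6 : a7 ≤ a6) (o7 : a8 ≤ a7) (o8 : 0 ≤ a8)
    (ht : a1-a2-a3+a4-a5+a6+a7-a8 ≥ 0) :
    (p - (a1-a2-a3+a4-a5+a6+a7-a8))^2 ≤ p^2+a1^2+a2^2+a3^2+a4^2+a5^2+a6^2+a7^2+a8^2 := by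
  nlinarith [sq_nonneg (p - (a1-a2-a3+a4-a5+a6+a7-a8)), mul_nonneg o8 (sub_nonneg.2 o7)]
lemma tuplet18_pair7neg (p a1 a2 a3 a4 a5 a6 a7 a8 : ℝ)
    (o0 : a1 ≤ p) (o1 : a2 ≤ a1) (o2 : a3 ≤ a2) (o3 : a4 ≤ a3) (o4 : a5 ≤ a4)
    (o5 : a6 ≤ a5) (o6 : a7 ≤ a6) (o7 : a8 ≤ a7) (o8 : 0 ≤ a8)
    (ht : a1-a2-a3+a4-a5-a6+a7-a8 ≤ 0) :
    (p + (a1-a2-a3+a4-a5-a6+a7-a8))^2 ≤ p^2+a1^2+a2^2+a3^2+a4^2+a5^2+a6^2+a7^2+a8^2 := by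
  nlinarith [sq_nonneg (p + (a1-a2-a3+a4-a5-a6+a7-a8)), mul_nonneg o8 (sub_nonneg.2 o7)]

lemma tuplet18_pair7pos (p a1 a2 a3 a4 a5 a6 a7 a8 : ℝ)
    (o0 : a1 ≤ p) (o1 : a2 ≤ a1) (o2 : a3 ≤ a2) (o3 : a4 ≤ a3) (o4 : a5 ≤ a4)
    (o5 : a6 ≤ a5) (o6 : a7 ≤ a6) (o7 : a8 ≤ a7) (o8 : 0 ≤ a8)
    (ht : a1-a2-a3+a4-a5-a6+a7-a8 ≥ 0) :
    (p - (a1-a2-a3+a4-a5-a6+a7-a8))^2 ≤ p^2+a1^2+a2^2+a3^2+a4^2+a5^2+a6^2+a7^2+a8^2 := by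
  nlinarith [sq_nonneg (p - (a1-a2-a3+a4-a5-a6+a7-a8)), mul_nonneg o8 (sub_nonneg.2 o7)]
set_option maxHeartbeats 1000000 in
set_option maxRecDepth 40000 in
lemma tuplet18_coreA (p a1 a2 a3 a4 a5 a6 a7 a8 r : ℝ)
    (o0 : a1 ≤ p) (o1 : a2 ≤ a1) (o2 : a3 ≤ a2) (o3 : a4 ≤ a3) (o4 : a5 ≤ a4)
    (o5 : a6 ≤ a5) (o6 : a7 ≤ a6) (o7 : a8 ≤ a7) (o8 : 0 ≤ a8) (hr0 : 0 ≤ r)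
    (hS : p^2+a1^2+a2^2+a3^2+a4^2+a5^2+a6^2+a7^2+a8^2 ≤ r^2)
    (h1 : p + r < a1+a2+a3+a4+a5+a6+a7+a8)
    (h3 : r < p + |a1-a2+a3-a4-a5-a6-a7+a8|)
    (h5 : r < p + |a1-a2-a3+a4-a5+a6+a7-a8|)
    (h7 : r < p + |a1-a2-a3+a4-a5-a6+a7-a8|) : False := by
  rcases abs_cases (a1-a2+a3-a4-a5-a6-a7+a8) with ⟨e3, _⟩ | ⟨e3, _⟩ <;> rw [e3] at h3 <;>
  rcases abs_cases (a1-a2-a3+a4-a5+a6+a7-a8) with ⟨e5, _⟩ | ⟨e5, _⟩ <;> rw [e5] at h5 <;>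
  rcases abs_cases (a1-a2-a3+a4-a5-a6+a7-a8) with ⟨e7, _⟩ | ⟨e7, _⟩ <;> rw [e7] at h7 <;>
  linarith [mul_pos (sub_pos.2 h1) (sub_pos.2 h1), mul_pos (sub_pos.2 h1) (sub_pos.2 h3), mul_pos (sub_pos.2 h1) (sub_pos.2 h5), mul_pos (sub_pos.2 h1) (sub_pos.2 h7), mul_pos (sub_pos.2 h3) (sub_pos.2 h3), mul_pos (sub_pos.2 h3) (sub_pos.2 h5), mul_pos (sub_pos.2 h3) (sub_pos.2 h7), mul_pos (sub_pos.2 h5) (sub_pos.2 h5), mul_pos (sub_pos.2 h5) (sub_pos.2 h7), mul_pos (sub_pos.2 h7) (sub_pos.2 h7), mul_nonneg (le_of_lt (sub_pos.2 h1)) (sub_nonneg.2 o0), mul_nonneg (le_of_lt (sub_pos.2 h1)) (sub_nonneg.2 o1), mul_nonneg (le_of_lt (sub_pos.2 h1)) (sub_nonneg.2 o2), mul_nonneg (le_of_lt (sub_pos.2 h1)) (sub_nonneg.2 o3), mul_nonneg (le_of_lt (sub_pos.2 h1)) (sub_nonneg.2 o4), mul_nonneg (le_of_lt (sub_pos.2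 h1)) (sub_nonneg.2 o5), mul_nonneg (le_of_lt (sub_pos.2 h1)) (sub_nonneg.2 o6), mul_nonneg (le_of_lt (sub_pos.2 h1)) (sub_nonneg.2 o7), mul_nonneg (le_of_lt (sub_pos.2 h3)) (sub_nonneg.2 o0), mul_nonneg (le_of_lt (sub_pos.2 h3)) (sub_nonneg.2 o1), mul_nonneg (le_of_lt (sub_pos.2 h3)) (sub_nonneg.2 o2), mul_nonneg (le_of_lt (sub_pos.2 h3)) (sub_nonneg.2 o3), mul_nonneg (le_of_lt (sub_pos.2 h3)) (sub_nonneg.2 o4), mul_nonneg (le_of_lt (sub_pos.2 h3)) (sub_nonneg.2 o5), mul_nonneg (le_of_lt (sub_pos.2 h3)) (sub_nonneg.2 o6), mul_nonneg (le_of_lt (sub_pos.2 h3)) (sub_nonneg.2 o7), mul_nonneg (le_of_lt (sub_pos.2 h5)) (sub_nonneg.2 o0), mul_nonneg (le_of_lt (sub_pos.2 h5)) (sub_nonneg.2 o1), mul_nonneg (le_of_lt (sub_pos.2 h5)) (sub_nonneg.2 o2), mul_nonneg (le_of_lt (sub_pos.2 h5)) (sub_nonneg.2 o3), mul_nonneg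 (le_of_lt (sub_pos.2 h5)) (sub_nonneg.2 o4), mul_nonneg (le_of_lt (sub_pos.2 h5)) (sub_nonneg.2 o5), mul_nonneg (le_of_lt (sub_pos.2 h5)) (sub_nonneg.2 o6), mul_nonneg (le_of_lt (sub_pos.2 h5)) (sub_nonneg.2 o7), mul_nonneg (le_of_lt (sub_pos.2 h7)) (sub_nonneg.2 o0), mul_nonneg (le_of_lt (sub_pos.2 h7)) (sub_nonneg.2 o1), mul_nonneg (le_of_lt (sub_pos.2 h7)) (sub_nonneg.2 o2), mul_nonneg (le_of_lt (sub_pos.2 h7)) (sub_nonneg.2 o3), mul_nonneg (le_of_lt (sub_pos.2 h7)) (sub_nonneg.2 o4), mul_nonneg (le_of_lt (sub_pos.2 h7)) (sub_nonneg.2 o5), mul_nonneg (le_of_lt (sub_pos.2 h7)) (sub_nonneg.2 o6), mul_nonneg (le_of_lt (sub_pos.2 h7)) (sub_nonneg.2 o7), mul_nonneg (le_of_lt (sub_pos.2 h1)) o8, mul_nonneg (le_of_lt (sub_pos.2 h3)) o8, mul_nonneg (le_of_lt (sub_pos.2 h5)) o8, mul_nonneg (le_of_lt (sub_pos.2 h7))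 o8, mul_nonneg (le_of_lt (sub_pos.2 h1)) hr0, mul_nonneg (le_of_lt (sub_pos.2 h3)) hr0, mul_nonneg (le_of_lt (sub_pos.2 h5)) hr0, mul_nonneg (le_of_lt (sub_pos.2 h7)) hr0, mul_nonneg (sub_nonneg.2 o0) (sub_nonneg.2 o0), mul_nonneg (sub_nonneg.2 o0) (sub_nonneg.2 o1), mul_nonneg (sub_nonneg.2 o0) (sub_nonneg.2 o2), mul_nonneg (sub_nonneg.2 o0) (sub_nonneg.2 o3), mul_nonneg (sub_nonneg.2 o0) (sub_nonneg.2 o4), mul_nonneg (sub_nonneg.2 o0) (sub_nonneg.2 o5), mul_nonneg (sub_nonneg.2 o0) (sub_nonneg.2 o6), mul_nonneg (sub_nonneg.2 o0) (sub_nonneg.2 o7), mul_nonneg (sub_nonneg.2 o1) (sub_nonneg.2 o1), mul_nonneg (sub_nonneg.2 o1) (sub_nonneg.2 o2), mul_nonneg (sub_nonneg.2 o1) (sub_nonneg.2 o3), mul_nonneg (sub_nonneg.2 o1) (sub_nonneg.2 o4), mul_nonneg (sub_nonneg.2 o1) (sub_nonneg.2 o5), mul_nonneg (sub_nonneg.2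 o1) (sub_nonneg.2 o6), mul_nonneg (sub_nonneg.2 o1) (sub_nonneg.2 o7), mul_nonneg (sub_nonneg.2 o2) (sub_nonneg.2 o2), mul_nonneg (sub_nonneg.2 o2) (sub_nonneg.2 o3), mul_nonneg (sub_nonneg.2 o2) (sub_nonneg.2 o4), mul_nonneg (sub_nonneg.2 o2) (sub_nonneg.2 o5), mul_nonneg (sub_nonneg.2 o2) (sub_nonneg.2 o6), mul_nonneg (sub_nonneg.2 o2) (sub_nonneg.2 o7), mul_nonneg (sub_nonneg.2 o3) (sub_nonneg.2 o3), mul_nonneg (sub_nonneg.2 o3) (sub_nonneg.2 o4), mul_nonneg (sub_nonneg.2 o3) (sub_nonneg.2 o5), mul_nonneg (sub_nonneg.2 o3) (sub_nonneg.2 o6), mul_nonneg (sub_nonneg.2 o3) (sub_nonneg.2 o7), mul_nonneg (sub_nonneg.2 o4) (sub_nonneg.2 o4), mul_nonneg (sub_nonneg.2 o4) (sub_nonneg.2 o5), mul_nonneg (sub_nonneg.2 o4) (sub_nonneg.2 o6), mul_nonneg (sub_nonneg.2 o4) (sub_nonneg.2 o7), mul_nonneg (sub_nonneg.2 o5) (sub_nonneg.2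 o5), mul_nonneg (sub_nonneg.2 o5) (sub_nonneg.2 o6), mul_nonneg (sub_nonneg.2 o5) (sub_nonneg.2 o7), mul_nonneg (sub_nonneg.2 o6) (sub_nonneg.2 o6), mul_nonneg (sub_nonneg.2 o6) (sub_nonneg.2 o7), mul_nonneg (sub_nonneg.2 o7) (sub_nonneg.2 o7), mul_nonneg (sub_nonneg.2 o0) o8, mul_nonneg (sub_nonneg.2 o1) o8, mul_nonneg (sub_nonneg.2 o2) o8, mul_nonneg (sub_nonneg.2 o3) o8, mul_nonneg (sub_nonneg.2 o4) o8, mul_nonneg (sub_nonneg.2 o5) o8, mul_nonneg (sub_nonneg.2 o6) o8, mul_nonneg (sub_nonneg.2 o7) o8, mul_nonneg o8 o8, mul_nonneg hr0 (sub_nonneg.2 o0), mul_nonneg hr0 (sub_nonneg.2 o1), mul_nonneg hr0 (sub_nonneg.2 o2), mul_nonneg hr0 (sub_nonneg.2 o3), mul_nonneg hr0 (sub_nonneg.2 o4), mul_nonneg hr0 (sub_nonneg.2 o5), mul_nonneg hr0 (sub_nonneg.2 o6), mul_nonneg hr0 (sub_nonneg.2 o7), mul_nonneg hr0 o8, mul_nonneg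 hr0 hr0]

theorem stmt_18 (a : Fin 9 → ℝ)
    (hdec : ∀ i j : Fin 9, i ≤ j → a j ≤ a i) (hpos : ∀ i, 0 ≤ a i) :
    4 ≤ ((Finset.univ : Finset (Fin 8)).filter (fun ℓ =>
        |∑ i, (![![1, 1, 1, 1, 1, 1, 1, 1, 1],
                 ![1, -1, -1, -1, -1, -1, -1, -1, -1],
                 ![1, 1, -1, 1, -1, -1, -1, -1, 1],
                 ![1, -1, 1, -1, 1, 1, 1, 1, -1],
                 ![1, 1, -1, -1, 1, -1, 1, 1, -1],
                 ![1, -1, 1, 1, -1, 1, -1, -1, 1],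
                 ![1, 1, -1, -1, 1, -1, -1, 1, -1],
                 ![1, -1, 1, 1, -1, 1, 1, -1, 1]] : Fin 8 → Fin 9 → ℝ) ℓ i * a i|
          ≤ Real.sqrt (∑ i, a i ^ 2))).card := by
  set M := (![![1, 1, 1, 1, 1, 1, 1, 1, 1],
                 ![1, -1, -1, -1, -1, -1, -1, -1, -1],
                 ![1, 1, -1, 1, -1, -1, -1, -1, 1],
                 ![1, -1, 1, -1, 1, 1, 1, 1, -1],
                 ![1, 1, -1, -1, 1, -1, 1, 1, -1],
                 ![1, -1, 1, 1, -1, 1, -1, -1, 1],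
                 ![1, 1, -1, -1, 1, -1, -1, 1, -1],
                 ![1, -1, 1, 1, -1, 1, 1, -1, 1]] : Fin 8 → Fin 9 → ℝ) with hM
  set r := Real.sqrt (∑ i, a i ^ 2) with hr
  have o0 : a 1 ≤ a 0 := hdec 0 1 (by decide)
  have o1 : a 2 ≤ a 1 := hdec 1 2 (by decide)
  have o2 : a 3 ≤ a 2 := hdec 2 3 (by decide)
  have o3 : a 4 ≤ a 3 := hdec 3 4 (by decide)
  have o4 : a 5 ≤ a 4 := hdec 4 5 (by decide)
  have o5 : a 6 ≤ a 5 := hdec 5 6 (by decide)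
  have o6 : a 7 ≤ a 6 := hdec 6 7 (by decide)
  have o7 : a 8 ≤ a 7 := hdec 7 8 (by decide)
  have o8 : 0 ≤ a 8 := hpos 8
  have hSnn : (0:ℝ) ≤ ∑ i, a i ^ 2 := by positivity
  have hr0 : 0 ≤ r := Real.sqrt_nonneg _
  have hr2 : r ^ 2 = ∑ i, a i ^ 2 := Real.sq_sqrt hSnn
  have hSexp : ∑ i, a i ^ 2 = (a 0)^2 + (a 1)^2 + (a 2)^2 + (a 3)^2 + (a 4)^2
      + (a 5)^2 + (a 6)^2 + (a 7)^2 + (a 8)^2 := by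
    simp only [tuplet18_sum9 (fun i => a i ^ 2)]
  have hp_r : a 0 ≤ r := by
    have h2 : (a 0) ^ 2 ≤ ∑ i, a i ^ 2 := by
      rw [hSexp]; nlinarith [sq_nonneg (a 1), sq_nonneg (a 2), sq_nonneg (a 3), sq_nonneg (a 4),
        sq_nonneg (a 5), sq_nonneg (a 6), sq_nonneg (a 7), sq_nonneg (a 8)]
    calc a 0 = |a 0| := (abs_of_nonneg (hpos 0)).symm
    _ ≤ r := by rw [hr]; exact Real.abs_le_sqrt h2
  have e0 : ∑ i, M 0 i * a i = a 0 + (a 1 + a 2 + a 3 + a 4 + a 5 + a 6 + a 7 + a 8) := by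
    rw [hM, tuplet18_sum9]
    show (1:ℝ) * a 0 + (1:ℝ) * a 1 + (1:ℝ) * a 2 + (1:ℝ) * a 3 + (1:ℝ) * a 4 + (1:ℝ) * a 5 + (1:ℝ) * a 6 + (1:ℝ) * a 7 + (1:ℝ) * a 8 = a 0 + (a 1 + a 2 + a 3 + a 4 + a 5 + a 6 + a 7 + a 8)
    ring
  have e1 : ∑ i, M 1 i * a i = a 0 - (a 1 + a 2 + a 3 + a 4 + a 5 + a 6 + a 7 + a 8) := by
    rw [hM, tuplet18_sum9]
    show (1:ℝ) * a 0 + (-1:ℝ) * a 1 + (-1:ℝ) * a 2 + (-1:ℝ) * a 3 + (-1:ℝ) * a 4 + (-1:ℝ) * a 5 + (-1:ℝ) * a 6 + (-1:ℝ) * a 7 + (-1:ℝ) * a 8 = a 0 - (a 1 + a 2 + a 3 + a 4 + a 5 + a 6 + a 7 + a 8)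
    ring
  have e2 : ∑ i, M 2 i * a i = a 0 + (a 1 - a 2 + a 3 - a 4 - a 5 - a 6 - a 7 + a 8) := by
    rw [hM, tuplet18_sum9]
    show (1:ℝ) * a 0 + (1:ℝ) * a 1 + (-1:ℝ) * a 2 + (1:ℝ) * a 3 + (-1:ℝ) * a 4 + (-1:ℝ) * a 5 + (-1:ℝ) * a 6 + (-1:ℝ) * a 7 + (1:ℝ) * a 8 = a 0 + (a 1 - a 2 + a 3 - a 4 - a 5 - a 6 - a 7 + a 8)
    ring
  have e3 : ∑ i, M 3 i * a i = a 0 - (a 1 - a 2 + a 3 - a 4 - a 5 - a 6 - a 7 + a 8) := by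
    rw [hM, tuplet18_sum9]
    show (1:ℝ) * a 0 + (-1:ℝ) * a 1 + (1:ℝ) * a 2 + (-1:ℝ) * a 3 + (1:ℝ) * a 4 + (1:ℝ) * a 5 + (1:ℝ) * a 6 + (1:ℝ) * a 7 + (-1:ℝ) * a 8 = a 0 - (a 1 - a 2 + a 3 - a 4 - a 5 - a 6 - a 7 + a 8)
    ring
  have e4 : ∑ i, M 4 i * a i = a 0 + (a 1 - a 2 - a 3 + a 4 - a 5 + a 6 + a 7 - a 8) := by
    rw [hM, tuplet18_sum9]
    show (1:ℝ) * a 0 + (1:ℝ) * a 1 + (-1:ℝ) * a 2 + (-1:ℝ) * a 3 + (1:ℝ) * a 4 + (-1:ℝ) * a 5 + (1:ℝ) * a 6 + (1:ℝ) * a 7 + (-1:ℝ) * a 8 = a 0 + (a 1 - a 2 - a 3 + a 4 - a 5 + a 6 + a 7 - a 8)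
    ring
  have e5 : ∑ i, M 5 i * a i = a 0 - (a 1 - a 2 - a 3 + a 4 - a 5 + a 6 + a 7 - a 8) := by
    rw [hM, tuplet18_sum9]
    show (1:ℝ) * a 0 + (-1:ℝ) * a 1 + (1:ℝ) * a 2 + (1:ℝ) * a 3 + (-1:ℝ) * a 4 + (1:ℝ) * a 5 + (-1:ℝ) * a 6 + (-1:ℝ) * a 7 + (1:ℝ) * a 8 = a 0 - (a 1 - a 2 - a 3 + a 4 - a 5 + a 6 + a 7 - a 8)
    ring
  have e6 : ∑ i, M 6 i * a i = a 0 + (a 1 - a 2 - a 3 + a 4 - a 5 - a 6 + a 7 - a 8) := by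
    rw [hM, tuplet18_sum9]
    show (1:ℝ) * a 0 + (1:ℝ) * a 1 + (-1:ℝ) * a 2 + (-1:ℝ) * a 3 + (1:ℝ) * a 4 + (-1:ℝ) * a 5 + (-1:ℝ) * a 6 + (1:ℝ) * a 7 + (-1:ℝ) * a 8 = a 0 + (a 1 - a 2 - a 3 + a 4 - a 5 - a 6 + a 7 - a 8)
    ring
  have e7 : ∑ i, M 7 i * a i = a 0 - (a 1 - a 2 - a 3 + a 4 - a 5 - a 6 + a 7 - a 8) := by
    rw [hM, tuplet18_sum9]
    show (1:ℝ) * a 0 + (-1:ℝ) * a 1 + (1:ℝ) * a 2 + (1:ℝ) * a 3 + (-1:ℝ) * a 4 + (1:ℝ) * a 5 + (1:ℝ) * a 6 + (-1:ℝ) * a 7 + (1:ℝ) * a 8 = a 0 - (a 1 - a 2 - a 3 + a 4 - a 5 - a 6 + a 7 - a 8)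
    ring
  have P3 : |∑ i, M 2 i * a i| ≤ r ∨ |∑ i, M 3 i * a i| ≤ r := by
    rcases le_total (a 1 - a 2 + a 3 - a 4 - a 5 - a 6 - a 7 + a 8) 0 with ht | ht
    · left
      rw [e2, hr]
      refine Real.abs_le_sqrt ?_
      rw [hSexp]
      exact tuplet18_pair3neg (a 0) (a 1) (a 2) (a 3) (a 4) (a 5) (a 6) (a 7) (a 8)
        o0 o1 o2 o3 o4 o5 o6 o7 o8 ht
    · right
      rw [e3, hr]
      refine Real.abs_le_sqrt ?_
      rw [hSexp]
      exact tuplet18_pair3pos (a 0) (a 1) (a 2) (a 3) (a 4) (a 5) (a 6) (a 7) (a 8)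
        o0 o1 o2 o3 o4 o5 o6 o7 o8 ht
  have P5 : |∑ i, M 4 i * a i| ≤ r ∨ |∑ i, M 5 i * a i| ≤ r := by
    rcases le_total (a 1 - a 2 - a 3 + a 4 - a 5 + a 6 + a 7 - a 8) 0 with ht | ht
    · left
      rw [e4, hr]
      refine Real.abs_le_sqrt ?_
      rw [hSexp]
      exact tuplet18_pair5neg (a 0) (a 1) (a 2) (a 3) (a 4) (a 5) (a 6) (a 7) (a 8)
        o0 o1 o2 o3 o4 o5 o6 o7 o8 ht
    · right
      rw [e5, hr]
      refine Real.abs_le_sqrt ?_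
      rw [hSexp]
      exact tuplet18_pair5pos (a 0) (a 1) (a 2) (a 3) (a 4) (a 5) (a 6) (a 7) (a 8)
        o0 o1 o2 o3 o4 o5 o6 o7 o8 ht
  have P7 : |∑ i, M 6 i * a i| ≤ r ∨ |∑ i, M 7 i * a i| ≤ r := by
    rcases le_total (a 1 - a 2 - a 3 + a 4 - a 5 - a 6 + a 7 - a 8) 0 with ht | ht
    · left
      rw [e6, hr]
      refine Real.abs_le_sqrt ?_
      rw [hSexp]
      exact tuplet18_pair7neg (a 0) (a 1) (a 2) (a 3) (a 4) (a 5) (a 6) (a 7) (a 8)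
        o0 o1 o2 o3 o4 o5 o6 o7 o8 ht
    · right
      rw [e7, hr]
      refine Real.abs_le_sqrt ?_
      rw [hSexp]
      exact tuplet18_pair7pos (a 0) (a 1) (a 2) (a 3) (a 4) (a 5) (a 6) (a 7) (a 8)
        o0 o1 o2 o3 o4 o5 o6 o7 o8 ht
  have habs : ∀ x y : ℝ, 0 ≤ x → |x + y| ≤ x + |y| ∧ |x - y| ≤ x + |y| := by
    intro x y hx
    constructor
    · calc |x + y| ≤ |x| + |y| := abs_add_le x y
      _ = x + |y| := by rw [abs_of_nonneg hx]
    · calc |x - y| = |x + -y| := by ring_nf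
      _ ≤ |x| + |(-y)| := abs_add_le x (-y)
      _ = x + |y| := by rw [abs_of_nonneg hx, abs_neg]
  have P0 : |∑ i, M 0 i * a i| ≤ r ∨ |∑ i, M 1 i * a i| ≤ r ∨
      (|∑ i, M 2 i * a i| ≤ r ∧ |∑ i, M 3 i * a i| ≤ r) ∨
      (|∑ i, M 4 i * a i| ≤ r ∧ |∑ i, M 5 i * a i| ≤ r) ∨
      (|∑ i, M 6 i * a i| ≤ r ∧ |∑ i, M 7 i * a i| ≤ r) := by
    by_cases hg0 : |∑ i, M 0 i * a i| ≤ r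
    · exact Or.inl hg0
    by_cases hg1 : |∑ i, M 1 i * a i| ≤ r
    · exact Or.inr (Or.inl hg1)
    by_cases hq3 : a 0 + |a 1 - a 2 + a 3 - a 4 - a 5 - a 6 - a 7 + a 8| ≤ r
    · refine Or.inr (Or.inr (Or.inl ⟨?_, ?_⟩))
      · rw [e2]; exact le_trans ((habs (a 0) (a 1 - a 2 + a 3 - a 4 - a 5 - a 6 - a 7 + a 8) (hpos 0)).1) hq3
      · rw [e3]; exact le_trans ((habs (a 0) (a 1 - a 2 + a 3 - a 4 - a 5 - a 6 - a 7 + a 8) (hpos 0)).2) hq3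
    by_cases hq5 : a 0 + |a 1 - a 2 - a 3 + a 4 - a 5 + a 6 + a 7 - a 8| ≤ r
    · refine Or.inr (Or.inr (Or.inr (Or.inl ⟨?_, ?_⟩)))
      · rw [e4]; exact le_trans ((habs (a 0) (a 1 - a 2 - a 3 + a 4 - a 5 + a 6 + a 7 - a 8) (hpos 0)).1) hq5
      · rw [e5]; exact le_trans ((habs (a 0) (a 1 - a 2 - a 3 + a 4 - a 5 + a 6 + a 7 - a 8) (hpos 0)).2) hq5
    by_cases hq7 : a 0 + |a 1 - a 2 - a 3 + a 4 - a 5 - a 6 + a 7 - a 8| ≤ r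
    · refine Or.inr (Or.inr (Or.inr (Or.inr ⟨?_, ?_⟩)))
      · rw [e6]; exact le_trans ((habs (a 0) (a 1 - a 2 - a 3 + a 4 - a 5 - a 6 + a 7 - a 8) (hpos 0)).1) hq7
      · rw [e7]; exact le_trans ((habs (a 0) (a 1 - a 2 - a 3 + a 4 - a 5 - a 6 + a 7 - a 8) (hpos 0)).2) hq7
    exfalso
    rw [e1] at hg1
    have ht1 : a 0 + r < a 1 + a 2 + a 3 + a 4 + a 5 + a 6 + a 7 + a 8 := by
      rcases abs_cases (a 0 - (a 1 + a 2 + a 3 + a 4 + a 5 + a 6 + a 7 + a 8)) with ⟨eq1, _⟩ | ⟨eq1, _⟩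
      · have := not_le.1 hg1
        rw [eq1] at this
        have hts : 0 ≤ a 1 + a 2 + a 3 + a 4 + a 5 + a 6 + a 7 + a 8 := by
          have h1 := hpos 1; have h2 := hpos 2; have h3 := hpos 3; have h4 := hpos 4
          have h5 := hpos 5; have h6 := hpos 6; have h7 := hpos 7; have h8 := hpos 8
          linarith
        linarith
      · have := not_le.1 hg1
        rw [eq1] at this
        linarith
    exact tuplet18_coreA (a 0) (a 1) (a 2) (a 3) (a 4) (a 5) (a 6) (a 7) (a 8) r
      o0 o1 o2 o3 o4 o5 o6 o7 o8 hr0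
      (by rw [← hSexp, ← hr2]) ht1 (not_le.1 hq3) (not_le.1 hq5) (not_le.1 hq7)
  exact tuplet18_helper (fun ℓ => |∑ i, M ℓ i * a i| ≤ r) P3 P5 P7 P0
end
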